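/- Corner lemma: let tau be a term of the algebra A and let C^n_{tau^A}(p_i, q_i) = (r_1, ..., r_{2^n}) be its n-term cube on tuples p_i, q_i. If the first vertex r_1 equals all of its adjacent vertices, i.e. r_1 = r_{1 + 2^k} for all 0 <= k <= n-1, then the cube is constant: r_j = r_1 for all 1 <= j <= 2^n. -/

import Mathlib

/- Common formalization of the construction from
   "On the Descending Central Series of Higher Commutators for Simple Algebras".
   We fix `n = m + 2` (so `n ≥ 2` automatically). -/

namespace Paper

/-- The universe of the algebra `A`: generators `a i j`, `b i j`, the elements
`d k` (here 0-indexed, `d k` is the paper's `d_{k+1}`), the element `c`, and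
formal pairs `(x, s)` created at the successive stages of the construction. -/
inductive Uni (m : ℕ) : Type
  | a (i : Fin (m + 2)) (j : ℕ) : Uni m
  | b (i : Fin (m + 2)) (j : ℕ) : Uni m
  | d (k : ℕ) : Uni m
  | c : Uni m
  | pair (x : Fin (m + 2) → Uni m) (s : ℕ) : Uni m

variable {m : ℕ}

/-- membership in `B = { a_{i,j}, b_{i,j} }`. -/
def inB : Uni m → Prop
  | .a _ _ => True
  | .b _ _ => True
  | _ => False

/-- membership in `C = { a_1, …, a_n, b_1, …, b_n }` (`a_i = a_{i,0}`). -/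
def inC : Uni m → Prop
  | .a _ 0 => True
  | .b _ 0 => True
  | _ => False

/-- the binary digit used to encode a tuple in the base domain. -/
def bitOf : Uni m → ℕ
  | .b _ _ => 1
  | _ => 0

/-- The base domain `D₀ = { (x_1,…,x_n) : x_i ∈ {a_i, b_i} }`. -/
def D0 : Set (Fin (m + 2) → Uni m) := {x | ∀ i, x i = .a i 0 ∨ x i = .b i 0}

/-- the binary code of the first `n - 1` coordinates of a tuple. -/
def code (x : Fin (m + 2) → Uni m) : ℕ :=
  ∑ i : Fin (m + 2), if i.val < m + 1 then bitOf (x i) * 2 ^ i.val else 0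

/-- the stage at which an element appears (`A₀` elements at stage 0). -/
def stage : Uni m → ℕ
  | .pair _ s => s + 1
  | _ => 0

/-- the stage at which a tuple first lies in `A_i^n`. -/
def stageTup (x : Fin (m + 2) → Uni m) : ℕ := Finset.univ.sup fun i => stage (x i)

open Classical in
/-- The `n`-ary basic operation `f^A`.  On `D₀` it takes the values
`d_1, …, d_{2^{n-1}+1}` (0-indexed here) as in the paper: the tuple with
binary code `j-1` on its first `n-1` coordinates goes to `d_j`, except that the
all-`b` tuple goes to `d_{2^{n-1}+1}`.  Off `D₀` it is the canonical injection
into formal pairs, tagged by the stage. -/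
noncomputable def fA (x : Fin (m + 2) → Uni m) : Uni m :=
  if x ∈ D0 then
    if code x = 2 ^ (m + 1) - 1 ∧ bitOf (x ⟨m + 1, by omega⟩) = 1 then .d (2 ^ (m + 1))
    else .d (code x)
  else .pair x (stageTup x)

/-- The permutation `u^A = (a_1 b_1 a_2 b_2 … a_n b_n c)`. -/
def uA : Uni m → Uni m
  | .a i 0 => .b i 0
  | .b i 0 => if h : i.val + 1 < m + 2 then .a ⟨i.val + 1, h⟩ 0 else .c
  | .c => .a ⟨0, by omega⟩ 0
  | x => x

open Classical in
/-- The unary operation `u_{pqr}`: a 3-cycle on `p, q, r`, shifting the second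
index on `B`, the identity elsewhere. -/
noncomputable def upqr (p q r : Uni m) (x : Uni m) : Uni m :=
  if x = p then q
  else if x = q then r
  else if x = r then p
  else match x with
    | .a i j => .a i (j + 1)
    | .b i j => .b i (j + 1)
    | y => y

/-- `(p, q, r)` is a legitimate index triple for `u_{pqr}`: pairwise distinct
elements of `A \ B`. -/
def OkTriple (p q r : Uni m) : Prop :=
  p ≠ q ∧ q ≠ r ∧ p ≠ r ∧ ¬ inB p ∧ ¬ inB q ∧ ¬ inB r

/-- Terms in the language of `A` in `k` variables. -/
inductive Tm (m k : ℕ) : Type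
  | var (v : Fin k) : Tm m k
  | f (args : Fin (m + 2) → Tm m k) : Tm m k
  | u (t : Tm m k) : Tm m k
  | upqr (p q r : Uni m) (t : Tm m k) : Tm m k

/-- A term is well formed when every `u_{pqr}` symbol occurring in it is indexed
by a legitimate triple. -/
def TmOk {k : ℕ} : Tm m k → Prop
  | .var _ => True
  | .f args => ∀ i, TmOk (args i)
  | .u t => TmOk t
  | .upqr p q r t => OkTriple p q r ∧ TmOk t

/-- Interpretation of a term as a term operation of `A`. -/
noncomputable def eval {k : ℕ} : Tm m k → (Fin k → Uni m) → Uni m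
  | .var v, x => x v
  | .f args, x => fA fun i => eval (args i) x
  | .u t, x => uA (eval t x)
  | .upqr p q r t, x => upqr p q r (eval t x)

/-- The `k`-term cube of an operation `t` on pairs `(p_i, q_i)`: vertex `l`
(0-indexed, `l` is the paper's `i - 1`) evaluates `t` on the tuple choosing
`q i` in coordinate `i` exactly when the corresponding binary digit of `l` is
`1` (coordinate `0` corresponds to the most significant digit, so the pairs
`(2j-1, 2j)` of the paper are the vertices `(2j-2, 2j-1)` here, differing in
the last coordinate). -/
def cube {α : Type*} (k : ℕ) (t : (Fin k → α) → α) (p q : Fin k → α) (l : ℕ) : α :=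
  t fun i => if l / 2 ^ (k - 1 - i.val) % 2 = 1 then q i else p i

/-- The `k`-term cube of a `K`-ary term operation whose variables are grouped
into `k` blocks by `β` (the paper's tuples `𝐱_1, …, 𝐱_k`), on tuples
`(𝐩_i, 𝐪_i)` encoded by `p q : Fin K → α`. -/
def blockCube {α : Type*} {K : ℕ} (k : ℕ) (t : (Fin K → α) → α)
    (β : Fin K → Fin k) (p q : Fin K → α) (l : ℕ) : α :=
  t fun v => if l / 2 ^ (k - 1 - (β v).val) % 2 = 1 then q v else p v


/-! ### Auxiliary lemmas -/

/-- `C ∪ {c}`. -/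
def inCc (x : Uni m) : Prop := inC x ∨ x = .c

lemma inC_inB {x : Uni m} (h : inC x) : inB x := by
  cases x <;> simp_all [inC, inB]

/-- shift on `B`, identity elsewhere. -/
def shiftB : Uni m → Uni m
  | .a i j => .a i (j + 1)
  | .b i j => .b i (j + 1)
  | y => y

lemma shiftB_inj : Function.Injective (shiftB (m := m)) := by
  intro x y h
  cases x <;> cases y <;> simp_all [shiftB]

lemma shiftB_ne {p y : Uni m} (hp : ¬ inB p) (hyp : y ≠ p) : shiftB y ≠ p := by
  cases y <;> simp_all [shiftB, inB] <;> rintro rfl <;> simp [inB] at hp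

lemma upqr_else {p q r x : Uni m} (h1 : x ≠ p) (h2 : x ≠ q) (h3 : x ≠ r) :
    upqr p q r x = shiftB x := by
  unfold upqr
  rw [if_neg h1, if_neg h2, if_neg h3]
  cases x <;> rfl

lemma upqr_val_p {p q r : Uni m} : upqr p q r p = q := by simp [upqr]

lemma upqr_val_q {p q r : Uni m} (hpq : p ≠ q) : upqr p q r q = r := by
  unfold upqr; rw [if_neg (Ne.symm hpq), if_pos rfl]

lemma upqr_val_r {p q r : Uni m} (hpr : p ≠ r) (hqr : q ≠ r) : upqr p q r r = p := by
  unfold upqr; rw [if_neg (Ne.symm hpr), if_neg (Ne.symm hqr), if_pos rfl]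

lemma upqr_inj {p q r : Uni m} (h : OkTriple p q r) :
    Function.Injective (upqr p q r) := by
  obtain ⟨hpq, hqr, hpr, hp, hq, hr⟩ := h
  intro x y hxy
  have hs : ∀ z : Uni m, z ≠ p → z ≠ q → z ≠ r →
      upqr p q r z ≠ q ∧ upqr p q r z ≠ r ∧ upqr p q r z ≠ p := by
    intro z h1 h2 h3
    rw [upqr_else h1 h2 h3]
    exact ⟨shiftB_ne hq h2, shiftB_ne hr h3, shiftB_ne hp h1⟩
  by_cases hx1 : x = p
  · rw [hx1, upqr_val_p] at hxy
    by_cases hy1 : y = p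
    · rw [hx1, hy1]
    by_cases hy2 : y = q
    · rw [hy2, upqr_val_q hpq] at hxy; exact absurd hxy hqr
    by_cases hy3 : y = r
    · rw [hy3, upqr_val_r hpr hqr] at hxy; exact absurd hxy.symm hpq
    · exact absurd hxy.symm (hs y hy1 hy2 hy3).1
  by_cases hx2 : x = q
  · rw [hx2, upqr_val_q hpq] at hxy
    by_cases hy1 : y = p
    · rw [hy1, upqr_val_p] at hxy; exact absurd hxy.symm hqr
    by_cases hy2 : y = q
    · rw [hx2, hy2]
    by_cases hy3 : y = r
    · rw [hy3, upqr_val_r hpr hqr] at hxy; exact absurd hxy.symm hpr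
    · exact absurd hxy.symm (hs y hy1 hy2 hy3).2.1
  by_cases hx3 : x = r
  · rw [hx3, upqr_val_r hpr hqr] at hxy
    by_cases hy1 : y = p
    · rw [hy1, upqr_val_p] at hxy; exact absurd hxy hpq
    by_cases hy2 : y = q
    · rw [hy2, upqr_val_q hpq] at hxy; exact absurd hxy hpr
    by_cases hy3 : y = r
    · rw [hx3, hy3]
    · exact absurd hxy.symm (hs y hy1 hy2 hy3).2.2
  · by_cases hy1 : y = p
    · rw [hy1, upqr_val_p] at hxy; exact absurd hxy (hs x hx1 hx2 hx3).1
    by_cases hy2 : y = q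
    · rw [hy2, upqr_val_q hpq] at hxy; exact absurd hxy (hs x hx1 hx2 hx3).2.1
    by_cases hy3 : y = r
    · rw [hy3, upqr_val_r hpr hqr] at hxy; exact absurd hxy (hs x hx1 hx2 hx3).2.2
    · rw [upqr_else hx1 hx2 hx3, upqr_else hy1 hy2 hy3] at hxy
      exact shiftB_inj hxy

lemma uA_inj : Function.Injective (uA (m := m)) := by
  have key : ∀ x : Uni m, (fun z : Uni m =>
      match z with
      | .a i 0 => if h : i.val = 0 then Uni.c else .b ⟨i.val - 1, by omega⟩ 0
      | .b i 0 => .a i 0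
      | .c => .b ⟨m + 1, by omega⟩ 0
      | y => y) (uA x) = x := by
    intro x
    match x with
    | .a i 0 => simp [uA]
    | .a i (j+1) => simp [uA]
    | .b i 0 =>
      by_cases h : i.val + 1 < m + 2
      · simp only [uA, dif_pos h]
        simp
      · simp only [uA, dif_neg h]
        have : i = ⟨m + 1, by omega⟩ := Fin.ext (show i.val = m + 1 by omega)
        rw [this]
    | .b i (j+1) => simp [uA]
    | .c => simp [uA]
    | .d k => simp [uA]
    | .pair f s => simp [uA]
  intro x y hxy
  have := key x
  rw [hxy, key y] at this
  exact this.symm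

lemma uA_inCc_pre {x : Uni m} (h : inCc (uA x)) : inCc x := by
  match x with
  | .a i 0 => left; simp [inC]
  | .a i (j+1) => simp_all [uA, inCc, inC]
  | .b i 0 => left; simp [inC]
  | .b i (j+1) => simp_all [uA, inCc, inC]
  | .c => right; rfl
  | .d k => simp_all [uA, inCc, inC]
  | .pair f s => simp_all [uA, inCc, inC]

lemma upqr_inCc {p q r x : Uni m} (h : OkTriple p q r)
    (hc : inCc (upqr p q r x)) : upqr p q r x = .c := by
  obtain ⟨-, -, -, hp, hq, hr⟩ := h
  unfold upqr at hc ⊢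
  split_ifs at hc ⊢
  · rcases hc with h1 | h1
    · exact absurd (inC_inB h1) hq
    · exact h1
  · rcases hc with h1 | h1
    · exact absurd (inC_inB h1) hr
    · exact h1
  · rcases hc with h1 | h1
    · exact absurd (inC_inB h1) hp
    · exact h1
  · cases x <;> simp_all [inCc, inC]

lemma fA_not_inCc {x : Fin (m + 2) → Uni m} : ¬ inCc (fA x) := by
  unfold fA
  split_ifs <;> simp [inCc, inC]

/-- bit extraction. -/
lemma bit_pow2 (j J : ℕ) : 2 ^ j / 2 ^ J % 2 = if j = J then 1 else 0 := by
  rcases lt_trichotomy j J with h | h | h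
  · rw [Nat.div_eq_of_lt (Nat.pow_lt_pow_right one_lt_two h)]
    simp [Nat.ne_of_lt h]
  · subst h
    simp [Nat.div_self (pow_pos (show (0:ℕ) < 2 by norm_num) j)]
  · rw [Nat.pow_div h.le (by norm_num), if_neg (by omega)]
    obtain ⟨k, hk⟩ : ∃ k, j - J = k + 1 := ⟨j - J - 1, by omega⟩
    rw [hk, pow_succ, Nat.mul_mod_left]

lemma sum_bits_inj : ∀ (n : ℕ) (b b' : Fin n → ℕ), (∀ i, b i ≤ 1) → (∀ i, b' i ≤ 1) →
    (∑ i, b i * 2 ^ i.val) = (∑ i, b' i * 2 ^ i.val) → ∀ i, b i = b' i := by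
  intro n
  induction n with
  | zero => intro b b' _ _ _ i; exact absurd i.isLt (by omega)
  | succ n ih =>
    intro b b' hb hb' hsum i
    rw [Fin.sum_univ_succ, Fin.sum_univ_succ] at hsum
    have e1 : ∀ (c : Fin (n+1) → ℕ), (∑ i : Fin n, c i.succ * 2 ^ (i.succ : Fin (n+1)).val)
        = 2 * ∑ i : Fin n, c i.succ * 2 ^ i.val := by
      intro c
      rw [Finset.mul_sum]
      apply Finset.sum_congr rfl
      intro i _
      rw [Fin.val_succ, pow_succ]
      ring
    rw [e1 b, e1 b'] at hsum
    simp only [Fin.val_zero, pow_zero, mul_one] at hsum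
    have h0 : b 0 = b' 0 := by have := hb 0; have := hb' 0; omega
    have hrest : (∑ i : Fin n, b i.succ * 2 ^ i.val) = ∑ i : Fin n, b' i.succ * 2 ^ i.val := by
      omega
    have := ih (fun i => b i.succ) (fun i => b' i.succ) (fun i => hb i.succ)
      (fun i => hb' i.succ) hrest
    rcases Fin.eq_zero_or_eq_succ i with rfl | ⟨j, rfl⟩
    · exact h0
    · exact this j

lemma sum_bits_lt : ∀ (n : ℕ) (b : Fin n → ℕ), (∀ i, b i ≤ 1) →
    (∑ i, b i * 2 ^ i.val) < 2 ^ n := by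
  intro n
  induction n with
  | zero => intro b _; simp
  | succ n ih =>
    intro b hb
    rw [Fin.sum_univ_succ]
    have e1 : (∑ i : Fin n, b i.succ * 2 ^ (i.succ : Fin (n+1)).val)
        = 2 * ∑ i : Fin n, b i.succ * 2 ^ i.val := by
      rw [Finset.mul_sum]
      apply Finset.sum_congr rfl
      intro i _
      rw [Fin.val_succ, pow_succ]
      ring
    rw [e1]
    have h1 : (∑ i : Fin n, b i.succ * 2 ^ i.val) < 2 ^ n :=
      ih (fun i => b i.succ) (fun i => hb i.succ)
    have h2 := hb 0
    simp only [Fin.val_zero, pow_zero, mul_one, pow_succ]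
    omega

lemma bitOf_le_one (x : Uni m) : bitOf x ≤ 1 := by
  cases x <;> simp [bitOf]

/-- auxiliary bit function for `code`. -/
def bfun (x : Fin (m + 2) → Uni m) (i : Fin (m + 2)) : ℕ :=
  if i.val < m + 1 then bitOf (x i) else 0

lemma bfun_le_one (x : Fin (m + 2) → Uni m) (i : Fin (m + 2)) : bfun x i ≤ 1 := by
  unfold bfun
  split
  · exact bitOf_le_one _
  · omega

lemma code_eq_sum (x : Fin (m + 2) → Uni m) : code x = ∑ i, bfun x i * 2 ^ i.val := by
  unfold code bfun
  apply Finset.sum_congr rfl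
  intro i _
  split <;> simp

lemma code_lt (x : Fin (m + 2) → Uni m) : code x < 2 ^ (m + 1) := by
  have h1 : (∑ i : Fin (m + 1), bfun x i.castSucc * 2 ^ i.val) < 2 ^ (m + 1) :=
    sum_bits_lt _ _ (fun i => bfun_le_one x _)
  rw [code_eq_sum, Fin.sum_univ_castSucc]
  have hlast : bfun x (Fin.last (m + 1)) = 0 := by
    simp [bfun]
  rw [hlast]
  simp only [Fin.coe_castSucc, zero_mul, add_zero]
  exact h1

lemma code_inj {x y : Fin (m + 2) → Uni m} (hx : x ∈ D0) (hy : y ∈ D0)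
    (h : code x = code y) : ∀ i : Fin (m + 2), i.val < m + 1 → x i = y i := by
  intro i hi
  rw [code_eq_sum, code_eq_sum] at h
  have hb := sum_bits_inj (m + 2) (bfun x) (bfun y) (bfun_le_one x) (bfun_le_one y) h i
  rw [bfun, bfun, if_pos hi, if_pos hi] at hb
  rcases hx i with h1 | h1 <;> rcases hy i with h2 | h2 <;>
    rw [h1, h2] at hb ⊢ <;> simp_all [bitOf]

lemma fA_eq {x y : Fin (m + 2) → Uni m} (h : fA x = fA y) :
    x = y ∨ (x ∈ D0 ∧ y ∈ D0 ∧ ∀ i : Fin (m + 2), i.val < m + 1 → x i = y i) := by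
  unfold fA at h
  by_cases hx : x ∈ D0 <;> by_cases hy : y ∈ D0
  · rw [if_pos hx, if_pos hy] at h
    split_ifs at h with h1 h2 h2
    · left
      have hcode : code x = code y := by rw [h1.1, h2.1]
      funext i
      by_cases hi : i.val < m + 1
      · exact code_inj hx hy hcode i hi
      · have hieq : i = ⟨m + 1, Nat.lt_succ_self _⟩ := Fin.ext (show i.val = m + 1 by omega)
        rw [hieq]
        rcases hx ⟨m + 1, Nat.lt_succ_self _⟩ with h3 | h3 <;>
          rcases hy ⟨m + 1, Nat.lt_succ_self _⟩ with h4 | h4 <;>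
            rw [h3, h4] <;> first
              | rfl
              | (exfalso; rw [h3] at h1; exact zero_ne_one h1.2)
              | (exfalso; rw [h4] at h2; exact zero_ne_one h2.2)
    · injection h with h'
      exact absurd h'.symm (by have := code_lt y; omega)
    · injection h with h'
      exact absurd h' (by have := code_lt x; omega)
    · injection h with h'
      exact Or.inr ⟨hx, hy, code_inj hx hy h'⟩
  · rw [if_pos hx, if_neg hy] at h
    split_ifs at h <;> cases h
  · rw [if_neg hx, if_pos hy] at h
    split_ifs at h <;> cases h
  · rw [if_neg hx, if_neg hy] at h
    injection h with h' _
    exact Or.inl h'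

lemma D0_inCc {x : Fin (m + 2) → Uni m} (hx : x ∈ D0) (i : Fin (m + 2)) : inCc (x i) := by
  rcases hx i with h | h <;> rw [h] <;> left <;> simp [inC]

/-- Key fact: a term taking two distinct values in `C ∪ {c}` is a power of `u`
applied to a variable. -/
lemma clem {K : ℕ} : ∀ (t : Tm m K), TmOk t → ∀ (x y : Fin K → Uni m),
    inCc (eval t x) → inCc (eval t y) → eval t x ≠ eval t y →
    ∃ e v, ∀ z, eval t z = uA^[e] (z v) := by
  intro t
  induction t with
  | var v => intro _ x y _ _ _; exact ⟨0, v, fun z => rfl⟩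
  | f args ih => intro _ x y hx _ _; exact absurd hx fA_not_inCc
  | u t iht =>
    intro hok x y hx hy hne
    simp only [eval] at hx hy hne
    obtain ⟨e, v, hev⟩ := iht hok x y (uA_inCc_pre hx) (uA_inCc_pre hy)
      (fun h => hne (congrArg uA h))
    exact ⟨e + 1, v, fun z => by
      simp only [eval, hev z, Function.iterate_succ_apply']⟩
  | upqr p q r t iht =>
    intro hok x y hx hy hne
    simp only [eval] at hx hy hne
    exact absurd ((upqr_inCc hok.1 hx).trans (upqr_inCc hok.1 hy).symm) hne


/-- the argument tuple of a block cube vertex. -/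
def chi {m K : ℕ} (β : Fin K → Fin (m + 2)) (p q : Fin K → Uni m) (l : ℕ) :
    Fin K → Uni m :=
  fun v => if l / 2 ^ (m + 2 - 1 - (β v).val) % 2 = 1 then q v else p v

lemma blockCube_chi {K : ℕ} (t : (Fin K → Uni m) → Uni m) (β : Fin K → Fin (m + 2))
    (p q : Fin K → Uni m) (l : ℕ) :
    blockCube (m + 2) t β p q l = t (chi β p q l) := rfl

lemma chi_apply {K : ℕ} (β : Fin K → Fin (m + 2)) (p q : Fin K → Uni m) (l : ℕ)
    (v : Fin K) :
    chi β p q l v = if l / 2 ^ (m + 2 - 1 - (β v).val) % 2 = 1 then q v else p v := rfl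

lemma chi_zero {K : ℕ} (β : Fin K → Fin (m + 2)) (p q : Fin K → Uni m) (v : Fin K) :
    chi β p q 0 v = p v := by
  rw [chi_apply, Nat.zero_div, if_neg (by norm_num)]

lemma main {K : ℕ} (β : Fin K → Fin (m + 2)) (p q : Fin K → Uni m) :
    ∀ τ : Tm m K, TmOk τ →
    (∀ j, j < m + 2 →
      eval τ (chi β p q (2 ^ j)) = eval τ (chi β p q 0)) →
    ∀ l, eval τ (chi β p q l) = eval τ (chi β p q 0) := by
  intro τ
  induction τ with
  | var v =>
    intro _ hcorner l
    simp only [eval] at hcorner ⊢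
    have hE : m + 2 - 1 - (β v).val < m + 2 := by omega
    have h := hcorner _ hE
    rw [chi_apply, chi_zero, bit_pow2, if_pos rfl] at h
    rw [chi_apply, chi_zero]
    split
    · exact h
    · rfl
  | f args ih =>
    intro hok hcorner l
    simp only [eval] at hcorner ⊢
    by_cases hall : ∀ j, j < m + 2 → ∀ i,
        eval (args i) (chi β p q (2 ^ j)) = eval (args i) (chi β p q 0)
    · exact congrArg fA (funext fun i => ih i (hok i) (fun j hj => hall j hj i) l)
    · push_neg at hall
      obtain ⟨j0, hj0, i0, hi0⟩ := hall
      rcases fA_eq (hcorner j0 hj0) with heq | ⟨hxD, hyD, hagree⟩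
      · exact absurd (congrFun heq i0) hi0
      set L : Fin (m + 2) := ⟨m + 1, Nat.lt_succ_self _⟩ with hL
      have hi0L : i0 = L := by
        by_contra hc
        have h3 : i0.val ≠ m + 1 := fun h => hc (Fin.ext h)
        have h2 := i0.isLt
        exact hi0 (hagree i0 (by omega))
      have hd : eval (args L) (chi β p q (2 ^ j0)) ≠ eval (args L) (chi β p q 0) :=
        hi0L ▸ hi0
      obtain ⟨e, v0, hev⟩ := clem (args L) (hok L) _ _ (D0_inCc hxD L) (D0_inCc hyD L) hd
      set E := m + 2 - 1 - (β v0).val with hE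
      have hj0E : j0 = E := by
        by_contra hne
        apply hd
        rw [hev, hev]
        apply congrArg
        rw [chi_apply, chi_zero, ← hE, bit_pow2, if_neg hne, if_neg (by norm_num)]
      have hconst : ∀ i : Fin (m + 2), i.val < m + 1 → ∀ l',
          eval (args i) (chi β p q l') = eval (args i) (chi β p q 0) := by
        intro i hi
        apply ih i (hok i)
        intro j hj
        rcases fA_eq (hcorner j hj) with heq2 | ⟨_, _, hag2⟩
        · exact congrFun heq2 i
        · exact hag2 i hi
      by_cases hbit : l / 2 ^ E % 2 = 1
      · have hfun : (fun i => eval (args i) (chi β p q l))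
            = fun i => eval (args i) (chi β p q (2 ^ j0)) := by
          funext i
          by_cases hi : i.val < m + 1
          · rw [hconst i hi l, hconst i hi (2 ^ j0)]
          · have h2 := i.isLt
            have hiL : i = L := Fin.ext (show i.val = m + 1 by omega)
            rw [hiL, hev, hev]
            apply congrArg
            rw [chi_apply, chi_apply, ← hE, if_pos hbit, hj0E, bit_pow2]
            simp
        rw [hfun]
        exact hcorner j0 hj0
      · have hfun : (fun i => eval (args i) (chi β p q l))
            = fun i => eval (args i) (chi β p q 0) := by
          funext i
          by_cases hi : i.val < m + 1
          · exact hconst i hi l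
          · have h2 := i.isLt
            have hiL : i = L := Fin.ext (show i.val = m + 1 by omega)
            rw [hiL, hev, hev]
            apply congrArg
            rw [chi_apply, chi_zero, ← hE, if_neg hbit]
        rw [hfun]
  | u t iht =>
    intro hok hcorner l
    simp only [eval] at hcorner ⊢
    exact congrArg uA (iht hok (fun j hj => uA_inj (hcorner j hj)) l)
  | upqr p' q' r' t iht =>
    intro hok hcorner l
    simp only [eval] at hcorner ⊢
    exact congrArg _ (iht hok.2 (fun j hj => upqr_inj hok.1 (hcorner j hj)) l)

/-- Lemma `cornerequal`: if the first vertex of an `n`-term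
cube of a term operation of `A` equals all of its adjacent vertices (the
vertices with 0-indexed positions `2^j`), then the cube is constant. -/
theorem stmt10 {m K : ℕ} (τ : Tm m K) (hok : TmOk τ)
    (β : Fin K → Fin (m + 2)) (p q : Fin K → Uni m)
    (hcorner : ∀ j, j < m + 2 →
      blockCube (m + 2) (eval τ) β p q (2 ^ j) = blockCube (m + 2) (eval τ) β p q 0) :
    ∀ l, l < 2 ^ (m + 2) →
      blockCube (m + 2) (eval τ) β p q l = blockCube (m + 2) (eval τ) β p q 0 := by
  intro l _
  simp only [blockCube_chi] at hcorner ⊢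
  exact main β p q τ hok hcorner l

end Paper
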